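/- Entailment in propositional definite Horn logic is expressible by an N2RPQ over a polynomially-sized graph: given a set T = {φ_1,…,φ_n} of definite Horn clauses over variables V with φ_1 = (g → g), the ABox A = A_1 ∪ A_2 (where A_1 contains, for each rule φ_i = v_1 ∧ … ∧ v_m → v_{m+1}, the chain p_{v_{m+1}}(e^i_{m+1}, e^i_m), …, p_{v_1}(e^i_1, e^i_0), s(e^i_0, f), and A_2 contains t(e^i_{l-1}, e^j_{n+1}) whenever the l-th body variable of φ_i equals the head of φ_j) and the expressions E_1 = (⋃_{v∈V} p_v · t · p_v) · s and E_i = (⋃_{v∈V} p_v · t · p_v) · (⟨E_{i-1}⟩ · ⋃_{v∈V} p_v)* · s for i > 1 satisfy: T ⊨ g if and only if (e^1_1, f) is an answer of the query E_{|V|}(x,y) over the interpretation determined by A (with empty TBox). -/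

import Mathlib

set_option autoImplicit false

namespace Paper

abbrev CN := ℕ
abbrev RN := ℕ
abbrev Ind := ℕ

structure Interp where
  Dom : Type
  nonempty : Nonempty Dom
  ind : Ind → Dom
  cn : CN → Set Dom
  rn : RN → Dom → Dom → Prop

inductive ERole where
  | name (p : RN)
  | inv (p : RN)
deriving DecidableEq

def ERole.sem (I : Interp) : ERole → I.Dom → I.Dom → Prop
  | .name p => I.rn p
  | .inv p => fun x y => I.rn p y x

def ERole.einv : ERole → ERole
  | .name p => .inv p
  | .inv p => .name p

inductive Role where
  | er (r : ERole)
  | ctest (A : CN)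
  | itest (a : Ind)
deriving DecidableEq

def Role.sem (I : Interp) : Role → I.Dom → I.Dom → Prop
  | .er r => r.sem I
  | .ctest A => fun x y => x = y ∧ x ∈ I.cn A
  | .itest a => fun x y => x = I.ind a ∧ y = I.ind a

inductive NRE where
  | role (σ : Role)
  | comp (E₁ E₂ : NRE)
  | union (E₁ E₂ : NRE)
  | star (E : NRE)
  | test (E : NRE)

def NRE.sem (I : Interp) : NRE → I.Dom → I.Dom → Prop
  | .role σ => σ.sem I
  | .comp E₁ E₂ => fun x z => ∃ y, E₁.sem I x y ∧ E₂.sem I y z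
  | .union E₁ E₂ => fun x y => E₁.sem I x y ∨ E₂.sem I x y
  | .star E => Relation.ReflTransGen (E.sem I)
  | .test E => fun x y => x = y ∧ ∃ z, E.sem I x z

def Role.NoITest : Role → Prop
  | .itest _ => False
  | _ => True

def NRE.NoITest : NRE → Prop
  | .role σ => σ.NoITest
  | .comp E₁ E₂ => E₁.NoITest ∧ E₂.NoITest
  | .union E₁ E₂ => E₁.NoITest ∧ E₂.NoITest
  | .star E => E.NoITest
  | .test E => E.NoITest

def NRE.NestFree : NRE → Prop
  | .role _ => True
  | .comp E₁ E₂ => E₁.NestFree ∧ E₂.NestFree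
  | .union E₁ E₂ => E₁.NestFree ∧ E₂.NestFree
  | .star E => E.NestFree
  | .test _ => False

structure NNFA where
  n : ℕ
  St : Fin n → Type
  init : ∀ i, St i
  final : ∀ i, Set (St i)
  transRole : ∀ i, St i → Role → St i → Prop
  transTest : ∀ i, St i → Fin n → St i → Prop
  test_gt : ∀ i s j s', transTest i s j s' → i < j

inductive NNFA.Accept (M : NNFA) (I : Interp) :
    ∀ i : Fin M.n, M.St i → Set (M.St i) → I.Dom → I.Dom → Prop where
  | refl {i : Fin M.n} {s : M.St i} {F : Set (M.St i)} {o : I.Dom} :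
      s ∈ F → NNFA.Accept M I i s F o o
  | step {i : Fin M.n} {s s' : M.St i} {F : Set (M.St i)} {σ : Role} {o o' o'' : I.Dom} :
      M.transRole i s σ s' → σ.sem I o o' → NNFA.Accept M I i s' F o' o'' →
      NNFA.Accept M I i s F o o''
  | test {i : Fin M.n} {s s' : M.St i} {F : Set (M.St i)} {j : Fin M.n} {o o₁ o'' : I.Dom} :
      M.transTest i s j s' → NNFA.Accept M I j (M.init j) (M.final j) o o₁ →
      NNFA.Accept M I i s' F o o'' → NNFA.Accept M I i s F o o''

def NNFA.NoITest (M : NNFA) : Prop :=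
  ∀ i (s : M.St i) (a : Ind) (s' : M.St i), ¬ M.transRole i s (.itest a) s'

inductive RTree (L : Type) where
  | leaf (l : L)
  | one (l : L) (c : RTree L)
  | two (l : L) (c₁ c₂ : RTree L)

def RTree.label {L : Type} : RTree L → L
  | .leaf l => l
  | .one l _ => l
  | .two l _ _ => l

def RTree.leaves {L : Type} : RTree L → List L
  | .leaf l => [l]
  | .one _ c => c.leaves
  | .two _ c₁ c₂ => c₁.leaves ++ c₂.leaves

def NNFA.IsRun (M : NNFA) (I : Interp) : RTree ((Σ i, M.St i) × I.Dom) → Prop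
  | .leaf _ => True
  | .one l c => M.IsRun I c ∧
      ∃ (σ : Role) (s' : M.St l.1.1) (o' : I.Dom),
        M.transRole l.1.1 l.1.2 σ s' ∧ σ.sem I l.2 o' ∧ c.label = (⟨l.1.1, s'⟩, o')
  | .two l c₁ c₂ => M.IsRun I c₁ ∧ M.IsRun I c₂ ∧
      ∃ (j : Fin M.n) (s' : M.St l.1.1),
        M.transTest l.1.1 l.1.2 j s' ∧ c₁.label = (⟨l.1.1, s'⟩, l.2) ∧
        c₂.label = (⟨j, M.init j⟩, l.2)

def NNFA.FullRun (M : NNFA) (I : Interp) (i : Fin M.n) (o₁ : I.Dom) (s₁ : M.St i)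
    (o₂ : I.Dom) (s₂ : M.St i) (t : RTree ((Σ j, M.St j) × I.Dom)) : Prop :=
  M.IsRun I t ∧ t.label = (⟨i, s₁⟩, o₁) ∧ ((⟨i, s₂⟩ : Σ j, M.St j), o₂) ∈ t.leaves ∧
  ∀ l ∈ t.leaves, l ≠ ((⟨i, s₂⟩ : Σ j, M.St j), o₂) → l.1.2 ∈ M.final l.1.1

end Paper
namespace Paper

/-- A propositional definite Horn clause. -/
structure HClause where
  body : List ℕ
  head : ℕ

/-- Derivability (truth in the least model) for definite Horn theories. -/
inductive Deriv (T : List HClause) : ℕ → Prop where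
  | step (c : HClause) : c ∈ T → (∀ v ∈ c.body, Deriv T v) → Deriv T c.head

/-- The interpretation determined by the ABox A₁ ∪ A₂ of the reduction:
`some (i,j)` is the constant e^{i+1}_j, `none` is f; role 0 is s, role 1 is t,
and role v+2 is p_v. -/
def hornI (T : List HClause) : Interp where
  Dom := Option (ℕ × ℕ)
  nonempty := ⟨none⟩
  ind := fun _ => none
  cn := fun _ => ∅
  rn := fun r x y =>
    (r = 0 ∧ ∃ i, i < T.length ∧ x = some (i, 0) ∧ y = none) ∨
    (r = 1 ∧ ∃ i j ci cj l, T[i]? = some ci ∧ T[j]? = some cj ∧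
      ci.body[l]? = some cj.head ∧ x = some (i, l) ∧ y = some (j, cj.body.length + 1)) ∨
    (∃ i cc, T[i]? = some cc ∧
      ((∃ l v, cc.body[l]? = some v ∧ r = v + 2 ∧ x = some (i, l + 1) ∧ y = some (i, l)) ∨
       (r = cc.head + 2 ∧ x = some (i, cc.body.length + 1) ∧ y = some (i, cc.body.length))))

def sNRE : NRE := .role (.er (.name 0))
def tNRE : NRE := .role (.er (.name 1))
def pNRE (v : ℕ) : NRE := .role (.er (.name (v + 2)))

def bigUnionNRE : List NRE → NRE
  | [] => .role (.ctest 0)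
  | [E] => E
  | E :: rest => .union E (bigUnionNRE rest)

def pvtpv (V : List ℕ) : NRE :=
  bigUnionNRE (V.map fun v => .comp (pNRE v) (.comp tNRE (pNRE v)))

def pUnion (V : List ℕ) : NRE := bigUnionNRE (V.map pNRE)

/-- `hornE V k` is the expression E_{k+1} of the reduction. -/
def hornE (V : List ℕ) : ℕ → NRE
  | 0 => .comp (pvtpv V) sNRE
  | k + 1 => .comp (pvtpv V) (.comp (.star (.comp (.test (hornE V k)) (pUnion V))) sNRE)


section Helpers

/-- Bounded-depth derivability. -/
def DB (T : List HClause) : ℕ → ℕ → Prop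
  | 0, _ => False
  | n+1, v => ∃ c ∈ T, c.head = v ∧ ∀ w ∈ c.body, DB T n w

lemma DB_mono {T : List HClause} : ∀ {n v}, DB T n v → DB T (n+1) v
  | 0, _, h => h.elim
  | n+1, _, ⟨c, hc, hh, hb⟩ => ⟨c, hc, hh, fun w hw => DB_mono (hb w hw)⟩

lemma DB_le {T : List HClause} {n m v} (h : n ≤ m) (hd : DB T n v) : DB T m v := by
  induction m with
  | zero => cases Nat.le_zero.mp h; exact hd
  | succ m ih =>
    rcases Nat.lt_or_ge n (m+1) with h' | h'
    · exact DB_mono (ih (by omega))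
    · have : n = m + 1 := by omega
      exact this ▸ hd

lemma exists_DB_bound (T : List HClause) : ∀ (l : List ℕ),
    (∀ w ∈ l, ∃ n, DB T n w) → ∃ N, ∀ w ∈ l, DB T N w
  | [], _ => ⟨0, by simp⟩
  | a :: l, h => by
    obtain ⟨N1, hN1⟩ := exists_DB_bound T l (fun w hw => h w (by simp [hw]))
    obtain ⟨N2, hN2⟩ := h a (by simp)
    exact ⟨max N1 N2, by
      intro w hw
      rcases List.mem_cons.mp hw with rfl | hw
      · exact DB_le (Nat.le_max_right _ _) hN2
      · exact DB_le (Nat.le_max_left _ _) (hN1 w hw)⟩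

lemma deriv_iff_exists_DB {T : List HClause} {v : ℕ} : Deriv T v ↔ ∃ n, DB T n v := by
  constructor
  · intro h
    induction h with
    | step c hc hb ih =>
      obtain ⟨N, hN⟩ := exists_DB_bound T c.body ih
      exact ⟨N+1, c, hc, rfl, hN⟩
  · rintro ⟨n, hn⟩
    induction n generalizing v with
    | zero => exact hn.elim
    | succ n ih =>
      obtain ⟨c, hc, hh, hb⟩ := hn
      exact hh ▸ Deriv.step c hc (fun w hw => ih (hb w hw))

end Helpers


lemma DB_mem_V {T : List HClause} {V : List ℕ}
    (hvars : ∀ c ∈ T, c.head ∈ V ∧ ∀ v ∈ c.body, v ∈ V) {n v} (h : DB T n v) : v ∈ V := by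
  cases n with
  | zero => exact h.elim
  | succ n =>
    obtain ⟨c, hc, hh, -⟩ := h
    exact hh ▸ (hvars c hc).1

lemma DB_stab {T : List HClause} {n₀ : ℕ}
    (hstab : ∀ v, DB T (n₀+1) v ↔ DB T n₀ v) :
    ∀ d v, DB T (n₀ + d) v ↔ DB T n₀ v := by
  intro d
  induction d with
  | zero => intro v; rfl
  | succ d ih =>
    intro v
    constructor
    · rintro ⟨c, hc, hh, hb⟩
      exact (hstab v).mp ⟨c, hc, hh, fun w hw => (ih w).mp (hb w hw)⟩
    · intro h
      exact DB_le (by omega) h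

lemma exists_stab (T : List HClause) (V : List ℕ) (hnd : V.Nodup)
    (hvars : ∀ c ∈ T, c.head ∈ V ∧ ∀ v ∈ c.body, v ∈ V) :
    ∃ n₀ ≤ V.length, ∀ v, DB T (n₀+1) v ↔ DB T n₀ v := by
  classical
  by_contra hcon
  push_neg at hcon
  set S : ℕ → Finset ℕ := fun n => V.toFinset.filter (fun v => DB T n v) with hS
  have hmono : ∀ n, S n ⊆ S (n+1) := by
    intro n v hv
    simp only [hS, Finset.mem_filter] at hv ⊢
    exact ⟨hv.1, DB_mono hv.2⟩
  have hssub : ∀ n ≤ V.length, S n ⊂ S (n+1) := by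
    intro n hn
    obtain ⟨v, hv⟩ := hcon n hn
    refine (Finset.ssubset_iff_of_subset (hmono n)).mpr ?_
    have h1 : DB T (n+1) v ∧ ¬ DB T n v := by
      have := @DB_mono T n v
      tauto
    refine ⟨v, ?_, ?_⟩
    · simp only [hS, Finset.mem_filter, List.mem_toFinset]
      exact ⟨DB_mem_V hvars h1.1, h1.1⟩
    · simp only [hS, Finset.mem_filter, List.mem_toFinset]
      tauto
  have hcard : ∀ n ≤ V.length + 1, n ≤ (S n).card := by
    intro n
    induction n with
    | zero => omega
    | succ n ih =>
      intro hn
      have h2 := Finset.card_lt_card (hssub n (by omega))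
      have := ih (by omega)
      omega
  have h3 : (S (V.length + 1)).card ≤ V.length := by
    calc (S (V.length + 1)).card ≤ V.toFinset.card := Finset.card_le_card (Finset.filter_subset _ _)
    _ = V.length := List.toFinset_card_of_nodup hnd
  have := hcard (V.length + 1) le_rfl
  omega

lemma deriv_iff_DB_length {T : List HClause} {V : List ℕ} {g : ℕ} (hnd : V.Nodup)
    (hvars : ∀ c ∈ T, c.head ∈ V ∧ ∀ v ∈ c.body, v ∈ V) :
    Deriv T g ↔ DB T V.length g := by
  constructor
  · intro h
    obtain ⟨n, hn⟩ := deriv_iff_exists_DB.mp h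
    obtain ⟨n₀, hn₀, hstab⟩ := exists_stab T V hnd hvars
    rcases Nat.le_total n V.length with h' | h'
    · exact DB_le h' hn
    · have hn' : n₀ ≤ n := le_trans hn₀ h'
      have : DB T n₀ g := (DB_stab hstab (n - n₀) g).mp (by rwa [Nat.add_sub_cancel' hn'])
      exact DB_le hn₀ this
  · intro h
    exact deriv_iff_exists_DB.mpr ⟨_, h⟩


section Geometry

lemma getElem?_mem' {α : Type*} {l : List α} {k : ℕ} {a : α} (h : l[k]? = some a) : a ∈ l := by
  obtain ⟨h1, rfl⟩ := List.getElem?_eq_some_iff.mp h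
  exact List.getElem_mem h1

lemma getElem?_inj' {α : Type*} {l : List α} {k : ℕ} {a b : α}
    (h : l[k]? = some a) (h2 : l[k]? = some b) : a = b := by
  rw [h] at h2
  exact Option.some.inj h2

lemma hornI_rn_iff (T : List HClause) (r : ℕ) (x y : Option (ℕ × ℕ)) :
    (hornI T).rn r x y ↔
    ((r = 0 ∧ ∃ i, i < T.length ∧ x = some (i, 0) ∧ y = none) ∨
    (r = 1 ∧ ∃ i j ci cj l, T[i]? = some ci ∧ T[j]? = some cj ∧
      ci.body[l]? = some cj.head ∧ x = some (i, l) ∧ y = some (j, cj.body.length + 1)) ∨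
    (∃ i cc, T[i]? = some cc ∧
      ((∃ l v, cc.body[l]? = some v ∧ r = v + 2 ∧ x = some (i, l + 1) ∧ y = some (i, l)) ∨
       (r = cc.head + 2 ∧ x = some (i, cc.body.length + 1) ∧ y = some (i, cc.body.length))))) :=
  Iff.rfl

lemma rn_s_iff {T : List HClause} {x y : Option (ℕ × ℕ)} :
    (hornI T).rn 0 x y ↔ ∃ i, i < T.length ∧ x = some (i, 0) ∧ y = none := by
  rw [hornI_rn_iff]
  constructor
  · rintro (⟨-, h⟩ | ⟨h, -⟩ | ⟨i, cc, -, (⟨l, v, -, h, -⟩ | ⟨h, -⟩)⟩)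
    · exact h
    · exact absurd h (by omega)
    · exact absurd h (by omega)
    · exact absurd h (by omega)
  · intro h
    exact Or.inl ⟨rfl, h⟩

lemma rn_t_iff {T : List HClause} {x y : Option (ℕ × ℕ)} :
    (hornI T).rn 1 x y ↔ ∃ i j ci cj l, T[i]? = some ci ∧ T[j]? = some cj ∧
      ci.body[l]? = some cj.head ∧ x = some (i, l) ∧ y = some (j, cj.body.length + 1) := by
  rw [hornI_rn_iff]
  constructor
  · rintro (⟨h, -⟩ | ⟨-, h⟩ | ⟨i, cc, -, (⟨l, v, -, h, -⟩ | ⟨h, -⟩)⟩)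
    · exact absurd h (by omega)
    · exact h
    · exact absurd h (by omega)
    · exact absurd h (by omega)
  · intro h
    exact Or.inr (Or.inl ⟨rfl, h⟩)

lemma rn_p_iff {T : List HClause} {v : ℕ} {x y : Option (ℕ × ℕ)} :
    (hornI T).rn (v + 2) x y ↔ ∃ i cc, T[i]? = some cc ∧
      ((∃ l, cc.body[l]? = some v ∧ x = some (i, l + 1) ∧ y = some (i, l)) ∨
       (cc.head = v ∧ x = some (i, cc.body.length + 1) ∧ y = some (i, cc.body.length))) := by
  rw [hornI_rn_iff]
  constructor
  · rintro (⟨h, -⟩ | ⟨h, -⟩ | ⟨i, cc, hcc, (⟨l, w, hw, hr, hx, hy⟩ | ⟨hr, hx, hy⟩)⟩)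
    · exact absurd h (by omega)
    · exact absurd h (by omega)
    · obtain rfl : w = v := by omega
      exact ⟨i, cc, hcc, Or.inl ⟨l, hw, hx, hy⟩⟩
    · obtain rfl : cc.head = v := by omega
      exact ⟨i, cc, hcc, Or.inr ⟨rfl, hx, hy⟩⟩
  · rintro ⟨i, cc, hcc, (⟨l, hw, hx, hy⟩ | ⟨hh, hx, hy⟩)⟩
    · exact Or.inr (Or.inr ⟨i, cc, hcc, Or.inl ⟨l, v, hw, rfl, hx, hy⟩⟩)
    · exact Or.inr (Or.inr ⟨i, cc, hcc, Or.inr ⟨by rw [hh], hx, hy⟩⟩)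

lemma cn0_empty (T : List HClause) : ∀ x, x ∉ (hornI T).cn 0 := fun _ h => h

lemma bigUnion_sem {I : Interp} (h0 : ∀ x, x ∉ I.cn 0) :
    ∀ (L : List NRE) (x y : I.Dom), (bigUnionNRE L).sem I x y ↔ ∃ E ∈ L, E.sem I x y
  | [], x, y => by
      simp only [bigUnionNRE, NRE.sem, Role.sem]
      constructor
      · rintro ⟨rfl, h⟩
        exact (h0 x h).elim
      · rintro ⟨E, h, -⟩
        simp at h
  | [E], x, y => by simp [bigUnionNRE]
  | E :: F :: L, x, y => by
      have ih := bigUnion_sem h0 (F :: L) x y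
      show (NRE.union E (bigUnionNRE (F :: L))).sem I x y ↔ _
      simp only [NRE.sem]
      constructor
      · rintro (h | h)
        · exact ⟨E, by simp, h⟩
        · obtain ⟨G, hG, h⟩ := ih.mp h
          exact ⟨G, by simp [List.mem_cons.mp hG], h⟩
      · rintro ⟨G, hG, h⟩
        rcases List.mem_cons.mp hG with rfl | hG
        · exact Or.inl h
        · exact Or.inr (ih.mpr ⟨G, hG, h⟩)

lemma bigUnion_map_sem {I : Interp} (h0 : ∀ x, x ∉ I.cn 0) (f : ℕ → NRE) (L : List ℕ)
    (x y : I.Dom) : (bigUnionNRE (L.map f)).sem I x y ↔ ∃ v ∈ L, (f v).sem I x y := by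
  rw [bigUnion_sem h0]
  simp

lemma sNRE_sem {I : Interp} {x y : I.Dom} : sNRE.sem I x y ↔ I.rn 0 x y := Iff.rfl
lemma tNRE_sem {I : Interp} {x y : I.Dom} : tNRE.sem I x y ↔ I.rn 1 x y := Iff.rfl
lemma pNRE_sem {I : Interp} {v : ℕ} {x y : I.Dom} : (pNRE v).sem I x y ↔ I.rn (v + 2) x y :=
  Iff.rfl

lemma pvtpv_sem_iff {T : List HClause} {V : List ℕ}
    (hvars : ∀ c ∈ T, c.head ∈ V ∧ ∀ v ∈ c.body, v ∈ V) {x y : Option (ℕ × ℕ)} :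
    (pvtpv V).sem (hornI T) x y ↔ ∃ i ci l v j cj, T[i]? = some ci ∧ ci.body[l]? = some v ∧
      T[j]? = some cj ∧ cj.head = v ∧ x = some (i, l + 1) ∧ y = some (j, cj.body.length) := by
  rw [pvtpv]
  refine (bigUnion_map_sem (cn0_empty T) _ V x y).trans ?_
  constructor
  · rintro ⟨v, hvV, a, hxa, b, hab, hby⟩
    replace hxa := rn_p_iff.mp (pNRE_sem.mp hxa)
    replace hby := rn_p_iff.mp (pNRE_sem.mp hby)
    replace hab := rn_t_iff.mp (tNRE_sem.mp hab)
    obtain ⟨i', j, ci', cj, l', hci', hcj, hbd, ha, hb⟩ := hab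
    obtain ⟨i, ci, hci, (⟨l, hl, hx, ha'⟩ | ⟨hh, hx, ha'⟩)⟩ := hxa
    · -- first p-edge is a body edge
      rw [ha'] at ha
      obtain ⟨rfl, rfl⟩ : i = i' ∧ l = l' := by
        have := Option.some.inj ha
        exact ⟨congrArg Prod.fst this, congrArg Prod.snd this⟩
      obtain rfl : ci = ci' := getElem?_inj' hci hci'
      obtain rfl : cj.head = v := by
        have := getElem?_inj' hbd hl
        omega
      -- second p-edge: analyze
      obtain ⟨j₂, cc₂, hcc₂, (⟨l₂, hl₂, hb', hy⟩ | ⟨hh₂, hb', hy⟩)⟩ := hby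
      · rw [hb'] at hb
        have hb2 := Option.some.inj hb
        simp only [Prod.mk.injEq] at hb2
        obtain ⟨rfl, h2⟩ := hb2
        obtain rfl : cj = cc₂ := getElem?_inj' hcj hcc₂
        obtain rfl : l₂ = cj.body.length := by omega
        simp at hl₂
      · rw [hb'] at hb
        have hb2 := Option.some.inj hb
        simp only [Prod.mk.injEq] at hb2
        obtain ⟨rfl, -⟩ := hb2
        obtain rfl : cj = cc₂ := getElem?_inj' hcj hcc₂
        exact ⟨i, ci, l, cj.head, _, cj, hci, hbd, hcj, rfl, hx, hy⟩
    · -- first p-edge is a head edge: impossible, since t needs a body position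
      rw [ha'] at ha
      obtain ⟨rfl, h2⟩ : i = i' ∧ ci.body.length = l' := by
        have := Option.some.inj ha
        exact ⟨congrArg Prod.fst this, congrArg Prod.snd this⟩
      obtain rfl : ci = ci' := getElem?_inj' hci hci'
      rw [← h2] at hbd
      simp at hbd
  · rintro ⟨i, ci, l, v, j, cj, hci, hl, hcj, hhd, rfl, rfl⟩
    have hciT : ci ∈ T := getElem?_mem' hci
    refine ⟨v, (hvars ci hciT).2 v (getElem?_mem' hl), some (i, l), ?_, some (j, cj.body.length + 1), ?_, ?_⟩
    · exact rn_p_iff.mpr ⟨i, ci, hci, Or.inl ⟨l, hl, rfl, rfl⟩⟩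
    · exact rn_t_iff.mpr ⟨i, j, ci, cj, l, hci, hcj, by rw [hhd]; exact hl, rfl, rfl⟩
    · exact rn_p_iff.mpr ⟨j, cj, hcj, Or.inr ⟨hhd, rfl, rfl⟩⟩

lemma pUnion_sem_iff {T : List HClause} {V : List ℕ} {x y : Option (ℕ × ℕ)} :
    (pUnion V).sem (hornI T) x y ↔ ∃ v ∈ V, (hornI T).rn (v + 2) x y := by
  rw [pUnion]
  refine (bigUnion_map_sem (cn0_empty T) pNRE V x y).trans ?_
  rfl

end Geometry


section Main

variable {T : List HClause} {V : List ℕ}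

/-- Constructing the inner star path downwards along a rule's body. -/
lemma star_down (E : NRE)
    (hvars : ∀ c ∈ T, c.head ∈ V ∧ ∀ v ∈ c.body, v ∈ V) {m : ℕ} {j : ℕ} {cj : HClause}
    (hcj : T[j]? = some cj)
    (hE_bwd : ∀ (i : ℕ) (ci : HClause) (l v : ℕ), T[i]? = some ci → ci.body[l]? = some v →
      DB T m v → ∃ z, E.sem (hornI T) (some (i, l + 1)) z)
    (hbody : ∀ (l w : ℕ), cj.body[l]? = some w → DB T m w) :
    ∀ l₀, l₀ ≤ cj.body.length →
      Relation.ReflTransGen ((NRE.comp (.test E) (pUnion V)).sem (hornI T))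
        (some (j, l₀)) (some (j, 0)) := by
  intro l₀
  induction l₀ with
  | zero => intro _; exact Relation.ReflTransGen.refl
  | succ l₀ ih =>
    intro hl₀
    have hlt : l₀ < cj.body.length := by omega
    obtain ⟨w, hw⟩ : ∃ w, cj.body[l₀]? = some w :=
      ⟨cj.body[l₀], List.getElem?_eq_some_iff.mpr ⟨hlt, rfl⟩⟩
    have hstep : (NRE.comp (.test E) (pUnion V)).sem (hornI T)
        (some (j, l₀ + 1)) (some (j, l₀)) := by
      refine ⟨some (j, l₀ + 1), ⟨rfl, ?_⟩, ?_⟩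
      · exact hE_bwd j cj l₀ w hcj hw (hbody l₀ w hw)
      · refine pUnion_sem_iff.mpr ⟨w, (hvars cj (getElem?_mem' hcj)).2 w (getElem?_mem' hw), ?_⟩
        exact rn_p_iff.mpr ⟨j, cj, hcj, Or.inl ⟨l₀, hw, rfl, rfl⟩⟩
    exact Relation.ReflTransGen.head hstep (ih (by omega))

/-- Deconstructing the inner star path. -/
lemma star_up (E : NRE) {m : ℕ} {j : ℕ} {cj : HClause} (hcj : T[j]? = some cj)
    (hE_fwd : ∀ x z, E.sem (hornI T) x z →
      ∃ (i : ℕ) (ci : HClause) (l v : ℕ), T[i]? = some ci ∧ ci.body[l]? = some v ∧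
        x = some (i, l + 1) ∧ DB T m v)
    {a b : Option (ℕ × ℕ)}
    (h : Relation.ReflTransGen ((NRE.comp (.test E) (pUnion V)).sem (hornI T)) a b) :
    ∀ l₀, a = some (j, l₀) → ∃ l₁ ≤ l₀, b = some (j, l₁) ∧
      ∀ (l w : ℕ), l₁ ≤ l → l < l₀ → cj.body[l]? = some w → DB T m w := by
  induction h using Relation.ReflTransGen.head_induction_on with
  | refl =>
    intro l₀ ha
    exact ⟨l₀, le_rfl, ha, fun l w h1 h2 _ => absurd h2 (by omega)⟩
  | @head a' c hstep _ ih =>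
    intro l₀ ha
    obtain ⟨mid, ⟨rfl, z, hz⟩, hpu⟩ := hstep
    obtain ⟨i', ci', l', v', hci', hbd', hx', hDB⟩ := hE_fwd _ _ hz
    rw [ha] at hx'
    have hx2 := Option.some.inj hx'
    simp only [Prod.mk.injEq] at hx2
    obtain rfl : cj = ci' := by
      rw [← hx2.1] at hci'
      exact getElem?_inj' hcj hci'
    have hl0 : l₀ = l' + 1 := hx2.2
    obtain ⟨w, hwV, hrn⟩ := pUnion_sem_iff.mp hpu
    rw [rn_p_iff] at hrn
    obtain ⟨i₂, cc₂, hcc₂, (⟨l₂, hl₂, hx₂, hc₂⟩ | ⟨hh₂, hx₂, hc₂⟩)⟩ := hrn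
    · rw [ha] at hx₂
      have hx3 := Option.some.inj hx₂
      simp only [Prod.mk.injEq] at hx3
      obtain rfl : cj = cc₂ := by
        rw [← hx3.1] at hcc₂
        exact getElem?_inj' hcj hcc₂
      have hc₂' : c = some (j, l') := by
        rw [hc₂, ← hx3.1]
        have : l₂ = l' := by omega
        rw [this]
      obtain ⟨l₁, hl₁, hb, hall⟩ := ih l' hc₂'
      refine ⟨l₁, by omega, hb, ?_⟩
      intro l u h1 h2 hu
      rcases Nat.lt_or_ge l l' with h4 | h4
      · exact hall l u h1 h4 hu
      · obtain rfl : l = l' := by omega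
        obtain rfl : u = v' := getElem?_inj' hu hbd'
        exact hDB
    · rw [ha] at hx₂
      have hx3 := Option.some.inj hx₂
      simp only [Prod.mk.injEq] at hx3
      obtain rfl : cj = cc₂ := by
        rw [← hx3.1] at hcc₂
        exact getElem?_inj' hcj hcc₂
      have hlen : l' = cj.body.length := by omega
      rw [hlen] at hbd'
      simp at hbd'

/-- Key characterization: `hornE V k` matches exactly the pairs
`(e^i_{l+1}, f)` where the `l`-th body variable of rule `i` is derivable in
at most `k+1` rounds. -/
lemma hornE_sem_iff (hvars : ∀ c ∈ T, c.head ∈ V ∧ ∀ v ∈ c.body, v ∈ V) :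
    ∀ (k : ℕ) (x y : Option (ℕ × ℕ)), (hornE V k).sem (hornI T) x y ↔
      (y = none ∧ ∃ (i : ℕ) (ci : HClause) (l v : ℕ), T[i]? = some ci ∧
        ci.body[l]? = some v ∧ x = some (i, l + 1) ∧ DB T (k + 1) v) := by
  intro k
  induction k with
  | zero =>
    intro x y
    constructor
    · rintro ⟨a, hpv, hs⟩
      obtain ⟨i, ci, l, v, j, cj, hci, hl, hcj, hhd, rfl, rfl⟩ := pvtpv_sem_iff hvars |>.mp hpv
      replace hs := rn_s_iff.mp (sNRE_sem.mp hs)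
      obtain ⟨i₃, -, ha, rfl⟩ := hs
      have h3 := Option.some.inj ha
      simp only [Prod.mk.injEq] at h3
      refine ⟨rfl, i, ci, l, v, hci, hl, rfl, cj, getElem?_mem' hcj, hhd, ?_⟩
      intro w hw
      rw [List.length_eq_zero_iff.mp h3.2] at hw
      simp at hw
    · rintro ⟨rfl, i, ci, l, v, hci, hl, rfl, hdb⟩
      obtain ⟨c, hc, hh, hb⟩ := hdb
      obtain ⟨j, hj⟩ := List.mem_iff_getElem?.mp hc
      have hnil : c.body = [] := by
        rw [List.eq_nil_iff_forall_not_mem]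
        intro w hw
        exact hb w hw
      refine ⟨some (j, c.body.length), ?_, ?_⟩
      · exact (pvtpv_sem_iff hvars).mpr ⟨i, ci, l, v, j, c, hci, hl, hj, hh, rfl, rfl⟩
      · refine sNRE_sem.mpr (rn_s_iff.mpr ?_)
        exact ⟨j, (List.getElem?_eq_some_iff.mp hj).1, by simp [hnil], rfl⟩
  | succ k ih =>
    intro x y
    have hE_fwd : ∀ x z, (hornE V k).sem (hornI T) x z →
        ∃ (i : ℕ) (ci : HClause) (l v : ℕ), T[i]? = some ci ∧ ci.body[l]? = some v ∧
          x = some (i, l + 1) ∧ DB T (k + 1) v := by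
      intro x z hxz
      exact ((ih x z).mp hxz).2
    have hE_bwd : ∀ (i : ℕ) (ci : HClause) (l v : ℕ), T[i]? = some ci →
        ci.body[l]? = some v → DB T (k + 1) v →
        ∃ z, (hornE V k).sem (hornI T) (some (i, l + 1)) z := by
      intro i ci l v h1 h2 h3
      exact ⟨none, (ih _ none).mpr ⟨rfl, i, ci, l, v, h1, h2, rfl, h3⟩⟩
    constructor
    · rintro ⟨a, hpv, b, hstar, hs⟩
      obtain ⟨i, ci, l, v, j, cj, hci, hl, hcj, hhd, rfl, rfl⟩ := pvtpv_sem_iff hvars |>.mp hpv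
      replace hs := rn_s_iff.mp (sNRE_sem.mp hs)
      obtain ⟨i₃, -, rfl, rfl⟩ := hs
      obtain ⟨l₁, hl₁, hb, hall⟩ := star_up (hornE V k) hcj hE_fwd hstar cj.body.length rfl
      have hb2 := Option.some.inj hb
      simp only [Prod.mk.injEq] at hb2
      obtain rfl : l₁ = 0 := hb2.2.symm
      refine ⟨rfl, i, ci, l, v, hci, hl, rfl, cj, getElem?_mem' hcj, hhd, ?_⟩
      intro w hw
      obtain ⟨lw, hlw⟩ := List.mem_iff_getElem?.mp hw
      exact hall lw w (Nat.zero_le _) (List.getElem?_eq_some_iff.mp hlw).1 hlw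
    · rintro ⟨rfl, i, ci, l, v, hci, hl, rfl, hdb⟩
      obtain ⟨c, hc, hh, hb⟩ := hdb
      obtain ⟨j, hj⟩ := List.mem_iff_getElem?.mp hc
      have hbody : ∀ (lw w : ℕ), c.body[lw]? = some w → DB T (k + 1) w :=
        fun lw w hw => hb w (getElem?_mem' hw)
      refine ⟨some (j, c.body.length), ?_, some (j, 0), ?_, ?_⟩
      · exact (pvtpv_sem_iff hvars).mpr ⟨i, ci, l, v, j, c, hci, hl, hj, hh, rfl, rfl⟩
      · exact star_down (hornE V k) hvars hj hE_bwd hbody c.body.length le_rfl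
      · refine sNRE_sem.mpr (rn_s_iff.mpr ?_)
        exact ⟨j, (List.getElem?_eq_some_iff.mp hj).1, rfl, rfl⟩

end Main

/-- T ⊨ g iff (e¹₁, f) is an answer of E_{|V|}(x,y) over the graph
determined by the ABox of the reduction. -/

theorem horn_entailment_via_n2rpq (T : List HClause) (V : List ℕ) (g : ℕ)
    (hnd : V.Nodup) (hg : g ∈ V)
    (hvars : ∀ c ∈ T, c.head ∈ V ∧ ∀ v ∈ c.body, v ∈ V)
    (h1 : T[0]? = some ⟨[g], g⟩) :
    Deriv T g ↔ (hornE V (V.length - 1)).sem (hornI T) (some (0, 1)) none := by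
  have hV1 : 1 ≤ V.length := List.length_pos_iff.mpr (List.ne_nil_of_mem hg)
  have hg0 : (⟨[g], g⟩ : HClause).body[0]? = some g := by simp
  rw [hornE_sem_iff hvars (V.length - 1) (some (0, 1)) none, Nat.sub_add_cancel hV1]
  constructor
  · intro h
    exact ⟨rfl, 0, ⟨[g], g⟩, 0, g, h1, hg0, rfl, (deriv_iff_DB_length hnd hvars).mp h⟩
  · rintro ⟨-, i, ci, l, v, hci, hl, hx, hdb⟩
    have h2 := Option.some.inj hx
    simp only [Prod.mk.injEq] at h2
    obtain rfl : i = 0 := h2.1.symm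
    obtain rfl : l = 0 := by omega
    obtain rfl : ci = ⟨[g], g⟩ := getElem?_inj' hci h1
    obtain rfl : v = g := getElem?_inj' hl hg0
    exact (deriv_iff_DB_length hnd hvars).mpr hdb

end Paper
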